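/- For any integer j ≥ -1, (v_{2j} w_{2j+1})^{d_{2j+3}} = v_{2j} v_{2j+1}; consequently, for any n ∈ ℕ, the product ∏_{j=-1}^{n-1} (v_{2j} w_{2j+1})^{d_{2j+3}} equals ∏_{j=-1}^{2n-1} v_j (concatenation in increasing order of index). -/

import Mathlib

/-- Letters: `a` is `false`, `b` is `true`. -/
abbrev Word := List Bool

/-- `wpow w k` is the `k`-fold concatenation `w^k`. -/
def wpow (w : Word) (k : ℕ) : Word := (List.replicate k w).flatten

lemma wpow_zero (u : Word) : wpow u 0 = [] := rfl

lemma wpow_succ (u : Word) (k : ℕ) : wpow u (k + 1) = u ++ wpow u k := by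
  simp [wpow, List.replicate_succ]

lemma wpow_succ' (u : Word) (k : ℕ) : wpow u (k + 1) = wpow u k ++ u := by
  simp [wpow, List.replicate_succ']

lemma wpow_conj (x y : Word) (e : ℕ) :
    wpow (x ++ y) e ++ x = x ++ wpow (y ++ x) e := by
  induction e with
  | zero => simp [wpow_zero]
  | succ e ih =>
      rw [wpow_succ, wpow_succ]
      simp only [List.append_assoc] at ih ⊢
      rw [ih]

/-- The last letter of `s n` is `true` iff `n` is odd. -/
lemma s_last (d : ℤ → ℕ) (s : ℤ → Word)
    (hs1 : s (-1) = [true]) (hs0 : s 0 = [false])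
    (hs : ∀ n : ℤ, 1 ≤ n → s n = wpow (s (n - 1)) (d n) ++ s (n - 2)) :
    ∀ m : ℤ, -1 ≤ m → s m = (s m).dropLast ++ [decide (Odd m)] := by
  have key : ∀ k : ℕ, ∀ m : ℤ, -1 ≤ m → m < (k : ℤ) →
      s m = (s m).dropLast ++ [decide (Odd m)] := by
    intro k
    induction k using Nat.strong_induction_on with
    | _ k ih =>
      intro m h1 h2
      rcases (by omega : m = -1 ∨ m = 0 ∨ 1 ≤ m) with hm | hm | hm
      · subst hm
        rw [hs1]
        norm_num [Int.odd_iff]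
      · subst hm
        rw [hs0]
        norm_num [Int.odd_iff]
      · have hk2 : (2 : ℕ) ≤ k := by omega
        have ih2 : s (m - 2) = (s (m - 2)).dropLast ++ [decide (Odd (m - 2))] := by
          refine ih (k - 2) (by omega) (m - 2) (by omega) ?_
          omega
        have hne : s (m - 2) ≠ [] := by
          intro h
          rw [h] at ih2
          simp at ih2
        have hpar : Odd (m - 2) ↔ Odd m := by
          simp only [Int.odd_iff]
          omega
        rw [hs m hm, List.dropLast_append_of_ne_nil hne, List.append_assoc]
        conv_lhs => rw [ih2]
        simp [hpar]
  intro m h1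
  exact key (m + 2).toNat m h1 (by omega)

lemma s_ne_nil (d : ℤ → ℕ) (s : ℤ → Word)
    (hs1 : s (-1) = [true]) (hs0 : s 0 = [false])
    (hs : ∀ n : ℤ, 1 ≤ n → s n = wpow (s (n - 1)) (d n) ++ s (n - 2)) :
    ∀ m : ℤ, -1 ≤ m → s m ≠ [] := by
  intro m hm h
  have := s_last d s hs1 hs0 hs m hm
  rw [h] at this
  simp at this

/-- The key fact: `v n = (w n ++ v (n-1))^(d (n+2) - 1) ++ w n` for `n ≥ 0`. -/
lemma adjoin_key (d : ℤ → ℕ) (s : ℤ → Word)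
    (hd : ∀ n : ℤ, 1 ≤ n → 1 ≤ d n)
    (hs1 : s (-1) = [true]) (hs0 : s 0 = [false])
    (hs : ∀ n : ℤ, 1 ≤ n → s n = wpow (s (n - 1)) (d n) ++ s (n - 2))
    (w : ℤ → Word)
    (hw : ∀ n : ℤ, 0 ≤ n → w n = (if Odd n then [false] else [true]) ++ (s n).dropLast)
    (v : ℤ → Word)
    (hv : ∀ n : ℤ, -1 ≤ n → v n = (if Odd n then [false] else [true]) ++ (wpow (s (n + 1)) (d (n + 2) - 1) ++ s n).dropLast) :
    ∀ m : ℤ, 0 ≤ m →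
      v m = wpow (w m ++ v (m - 1)) (d (m + 2) - 1) ++ w m := by
  intro m hm
  set c : Word := if Odd m then [false] else [true] with hc
  -- last letters
  have hlast_m : s m = (s m).dropLast ++ [decide (Odd m)] :=
    s_last d s hs1 hs0 hs m (by omega)
  have hlast_m1 : s (m + 1) = (s (m + 1)).dropLast ++ [decide (Odd (m + 1))] :=
    s_last d s hs1 hs0 hs (m + 1) (by omega)
  have hne_m : s m ≠ [] := s_ne_nil d s hs1 hs0 hs m (by omega)
  have hne_m1 : s (m - 1) ≠ [] := s_ne_nil d s hs1 hs0 hs (m - 1) (by omega)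
  have hparm1 : Odd (m + 1) ↔ ¬ Odd m := by
    simp only [Int.odd_iff]
    omega
  have hparm2 : Odd (m - 1) ↔ ¬ Odd m := by
    simp only [Int.odd_iff]
    omega
  -- the letter appended at the end of `s m` equals the prepended letter of `v (m-1)`
  have hc1 : (if Odd (m - 1) then ([false] : Word) else [true]) = [decide (Odd m)] := by
    by_cases h : Odd m <;> simp [hparm2, h]
  -- the letter appended at the end of `s (m+1)` equals `c`
  have hc2 : ([decide (Odd (m + 1))] : Word) = c := by
    by_cases h : Odd m <;> simp [hparm1, h, hc]
  -- v (m - 1) written out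
  have hvm1 : v (m - 1) =
      [decide (Odd m)] ++ (wpow (s m) (d (m + 1) - 1) ++ s (m - 1)).dropLast := by
    have := hv (m - 1) (by omega)
    rw [show m - 1 + 1 = m from by ring, show m - 1 + 2 = m + 1 from by ring] at this
    rw [this, hc1]
  -- s (m+1) recursion
  have hs1' : s (m + 1) = wpow (s m) (d (m + 1)) ++ s (m - 1) := by
    have := hs (m + 1) (by omega)
    rwa [show m + 1 - 1 = m from by ring, show m + 1 - 2 = m - 1 from by ring] at this
  have hd1 : d (m + 1) - 1 + 1 = d (m + 1) := by
    have := hd (m + 1) (by omega)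
    omega
  -- main computation : w m ++ v (m - 1) = c ++ (s (m+1)).dropLast
  have hWV : w m ++ v (m - 1) = c ++ (s (m + 1)).dropLast := by
    rw [hw m hm, ← hc, hvm1,
      List.dropLast_append_of_ne_nil hne_m1, hs1',
      List.dropLast_append_of_ne_nil hne_m1]
    calc c ++ (s m).dropLast ++ ([decide (Odd m)] ++ (wpow (s m) (d (m + 1) - 1) ++ (s (m - 1)).dropLast))
        = c ++ (((s m).dropLast ++ [decide (Odd m)]) ++ wpow (s m) (d (m + 1) - 1)) ++ (s (m - 1)).dropLast := by
          simp [List.append_assoc]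
      _ = c ++ (s m ++ wpow (s m) (d (m + 1) - 1)) ++ (s (m - 1)).dropLast := by
          rw [← hlast_m]
      _ = c ++ wpow (s m) (d (m + 1)) ++ (s (m - 1)).dropLast := by
          rw [← wpow_succ, hd1]
      _ = c ++ (wpow (s m) (d (m + 1)) ++ (s (m - 1)).dropLast) := by
          simp [List.append_assoc]
  -- now conclude
  rw [hv m (by omega), ← hc, hWV, hw m hm, ← hc,
    List.dropLast_append_of_ne_nil hne_m]
  calc c ++ (wpow (s (m + 1)) (d (m + 2) - 1) ++ (s m).dropLast)
      = (c ++ wpow (s (m + 1)) (d (m + 2) - 1)) ++ (s m).dropLast := by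
        simp [List.append_assoc]
    _ = (c ++ wpow ((s (m + 1)).dropLast ++ c) (d (m + 2) - 1)) ++ (s m).dropLast := by
        rw [show (s (m + 1)).dropLast ++ c = s (m + 1) from by rw [← hc2, ← hlast_m1]]
    _ = (wpow (c ++ (s (m + 1)).dropLast) (d (m + 2) - 1) ++ c) ++ (s m).dropLast := by
        rw [wpow_conj]
    _ = wpow (c ++ (s (m + 1)).dropLast) (d (m + 2) - 1) ++ (c ++ (s m).dropLast) := by
        simp [List.append_assoc]

/-- For any `j ≥ -1`, `(v₂ⱼ w₂ⱼ₊₁)^(d₂ⱼ₊₃) = v₂ⱼ v₂ⱼ₊₁`; consequently for any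
`n ∈ ℕ`, `∏_{j=-1}^{n-1} (v₂ⱼ w₂ⱼ₊₁)^(d₂ⱼ₊₃) = ∏_{j=-1}^{2n-1} vⱼ`. -/
theorem adjoining_product_identity (d : ℤ → ℕ) (s : ℤ → Word)
    (hd : ∀ n : ℤ, 1 ≤ n → 1 ≤ d n)
    (hs1 : s (-1) = [true]) (hs0 : s 0 = [false])
    (hs : ∀ n : ℤ, 1 ≤ n → s n = wpow (s (n - 1)) (d n) ++ s (n - 2))
    (w : ℤ → Word)
    (hw : ∀ n : ℤ, 0 ≤ n → w n = (if Odd n then [false] else [true]) ++ (s n).dropLast)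
    (hwm1 : w (-1) = [false]) (hwm2 : w (-2) = [])
    (v : ℤ → Word)
    (hv : ∀ n : ℤ, -1 ≤ n → v n = (if Odd n then [false] else [true]) ++ (wpow (s (n + 1)) (d (n + 2) - 1) ++ s n).dropLast)
    (hvm2 : v (-2) = []) :
    (∀ j : ℤ, -1 ≤ j →
      wpow (v (2 * j) ++ w (2 * j + 1)) (d (2 * j + 3)) = v (2 * j) ++ v (2 * j + 1)) ∧
    (∀ n : ℕ,
      ((List.range (n + 1)).map fun i =>
        wpow (v (2 * ((i : ℤ) - 1)) ++ w (2 * ((i : ℤ) - 1) + 1))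
          (d (2 * ((i : ℤ) - 1) + 3))).flatten =
      ((List.range (2 * n + 1)).map fun i => v ((i : ℤ) - 1)).flatten) := by
  have part1 : ∀ j : ℤ, -1 ≤ j →
      wpow (v (2 * j) ++ w (2 * j + 1)) (d (2 * j + 3)) = v (2 * j) ++ v (2 * j + 1) := by
    intro j hj
    rcases (by omega : j = -1 ∨ 0 ≤ j) with hj' | hj'
    · subst hj'
      norm_num
      -- goal about v (-2), w (-1), v (-1)
      have hvm1 : v (-1) = wpow [false] (d 1) := by
        have h := hv (-1) (by norm_num)
        norm_num [Int.odd_iff] at h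
        rw [hs0, hs1] at h
        have hd1 : d 1 - 1 + 1 = d 1 := by have := hd 1 (by norm_num); omega
        rw [h, List.dropLast_append_of_ne_nil (by simp : ([true] : Word) ≠ [])]
        simp only [List.dropLast_singleton, List.append_nil]
        rw [← List.singleton_append, ← wpow_succ, hd1]
      rw [hvm2, hvm1, hwm1]
      simp
    · have key := adjoin_key d s hd hs1 hs0 hs w hw v hv (2 * j + 1) (by omega)
      rw [show 2 * j + 1 - 1 = 2 * j from by ring,
        show 2 * j + 1 + 2 = 2 * j + 3 from by ring] at key
      have hd3 : d (2 * j + 3) - 1 + 1 = d (2 * j + 3) := by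
        have := hd (2 * j + 3) (by omega)
        omega
      rw [key, ← List.append_assoc, ← wpow_conj, List.append_assoc, ← wpow_succ',
        hd3]
  refine ⟨part1, ?_⟩
  intro n
  simp only [bind_pure_comp, List.map_eq_map, List.map_map, List.flatten]
  induction n with
  | zero =>
      simp only [List.range_succ, List.range_zero, List.nil_append, List.map_cons,
        List.map_nil, List.flatten, List.append_nil, Function.comp_apply]
      have h := part1 (-1) (by norm_num)
      norm_num at h ⊢
      rw [h, hvm2]
      simp
  | succ n ih =>
      conv_lhs => rw [List.range_succ]
      conv_rhs => rw [show 2 * (n + 1) + 1 = (2 * n + 1) + 1 + 1 from by ring,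
        List.range_succ, List.range_succ]
      simp only [List.map_append, List.flatten_append, List.map_cons, List.map_nil,
        List.flatten, List.append_nil, Function.comp_apply]
      rw [ih, List.append_assoc]
      congr 1
      have hp := part1 ((n : ℤ)) (by omega)
      push_cast
      rw [show 2 * ((n : ℤ) + 1 - 1) = 2 * (n : ℤ) from by ring,
        show 2 * (n : ℤ) + 1 - 1 = 2 * (n : ℤ) from by ring,
        show 2 * (n : ℤ) + 2 - 1 = 2 * (n : ℤ) + 1 from by ring]
      simp [hp]
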